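/- For n ≥ 3, the symmetrized polydisc G_n is not starlike with respect to the origin: there exists a point z ∈ G_n and s ∈ (0,1) with sz ∉ G_n. -/

import Mathlib

open Metric Finset

/-- The map whose `k`-th component is the `(k+1)`-st elementary symmetric polynomial. -/
noncomputable def symPoly (n : ℕ) (μ : Fin n → ℂ) : Fin n → ℂ :=
  fun k => ∑ s ∈ Finset.powersetCard ((k : ℕ) + 1) Finset.univ, ∏ i ∈ s, μ i

/-- The symmetrized `n`-disc `𝔾ₙ = πₙ(𝔻ⁿ)`. -/
def symPolydisc (n : ℕ) : Set (Fin n → ℂ) :=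
  {z | ∃ μ : Fin n → ℂ, (∀ i, ‖μ i‖ < 1) ∧ symPoly n μ = z}

lemma key_identity (n : ℕ) (ν : Fin n → ℂ) (lam : ℂ) :
    ∏ i, (1 - ν i * lam) = 1 + ∑ k : Fin n, (-lam) ^ ((k : ℕ) + 1) * symPoly n ν k := by
  have h1 : ∏ i : Fin n, (1 - ν i * lam) = ∏ i : Fin n, ((-lam) * ν i + 1) := by
    apply Finset.prod_congr rfl; intro i _; ring
  rw [h1, Finset.prod_add]
  have h2 : ∀ t ∈ (univ : Finset (Fin n)).powerset,
      (∏ i ∈ t, ((-lam) * ν i)) * ∏ i ∈ univ \ t, (1 : ℂ)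
        = (-lam) ^ t.card * ∏ i ∈ t, ν i := by
    intro t _
    rw [Finset.prod_const_one, mul_one, Finset.prod_mul_distrib, Finset.prod_const]
  rw [Finset.sum_congr rfl h2, Finset.sum_powerset]
  have h3 : ∀ j ∈ Finset.range ((univ : Finset (Fin n)).card + 1),
      (∑ t ∈ Finset.powersetCard j (univ : Finset (Fin n)),
          (-lam) ^ t.card * ∏ i ∈ t, ν i)
        = (-lam) ^ j * ∑ t ∈ Finset.powersetCard j (univ : Finset (Fin n)), ∏ i ∈ t, ν i := by
    intro j _
    rw [Finset.mul_sum]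
    apply Finset.sum_congr rfl
    intro t ht
    rw [(Finset.mem_powersetCard.mp ht).2]
  rw [Finset.sum_congr rfl h3]
  have hcard : (univ : Finset (Fin n)).card = n := by simp
  rw [hcard, Finset.sum_range_succ']
  simp only [pow_zero, one_mul, Finset.powersetCard_zero, Finset.sum_singleton,
    Finset.prod_empty]
  rw [add_comm]
  congr 1
  rw [← Fin.sum_univ_eq_sum_range (fun j => (-lam) ^ (j + 1) *
    ∑ t ∈ Finset.powersetCard (j + 1) (univ : Finset (Fin n)), ∏ i ∈ t, ν i)]
  rfl

/-- For `n ≥ 3`, the symmetrized polydisc is not starlike with respect to the origin. -/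
theorem symPolydisc_not_starlike (n : ℕ) (hn : 3 ≤ n) :
    ∃ z ∈ symPolydisc n, ∃ s : ℝ, s ∈ Set.Ioo (0 : ℝ) 1 ∧
      (fun i => (s : ℂ) * z i) ∉ symPolydisc n := by
  obtain ⟨m, rfl⟩ := Nat.exists_eq_add_of_le hn
  set μ : Fin (3 + m) → ℂ := fun i => if (i : ℕ) < 3 then 7/8 else 0 with hμ
  refine ⟨symPoly (3 + m) μ, ⟨μ, ?_, rfl⟩, 8/9, by norm_num, ?_⟩
  · intro i
    simp only [hμ]
    split <;> norm_num
  rintro ⟨ν, hν, hsym⟩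
  -- the special point λ₀
  set lam : ℂ := 6/7 - (2 * (Real.sqrt 3 : ℂ) / 7) * Complex.I with hlam
  have hw : ((Real.sqrt 3 : ℝ) : ℂ) ^ 2 = 3 := by
    rw [← Complex.ofReal_pow, Real.sq_sqrt (by norm_num : (3:ℝ) ≥ 0)]
    norm_num
  -- norm of lam is < 1
  have hlamnorm : ‖lam‖ < 1 := by
    have h1 : Complex.normSq lam = 48/49 := by
      simp only [hlam, Complex.normSq_apply]
      simp [Complex.sub_re, Complex.sub_im, Complex.mul_re, Complex.mul_im,
        Complex.div_re, Complex.div_im, Complex.I_re, Complex.I_im]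
      have := Real.sq_sqrt (by norm_num : (3:ℝ) ≥ 0)
      nlinarith [this]
    have h2 : ‖lam‖ ^ 2 = 48/49 := by
      rw [Complex.sq_norm]
      exact h1
    nlinarith [norm_nonneg lam]
  -- each factor 1 - ν i * lam is nonzero
  have hfac : ∀ i, (1 : ℂ) - ν i * lam ≠ 0 := by
    intro i h
    have h1 : ν i * lam = 1 := by linear_combination -h
    have h2 : ‖ν i * lam‖ < 1 := by
      rw [norm_mul]
      nlinarith [hν i, norm_nonneg (ν i), norm_nonneg lam]
    rw [h1] at h2
    simp at h2
  have hprodne : ∏ i, (1 - ν i * lam) ≠ 0 := Finset.prod_ne_zero_iff.mpr fun i _ => hfac i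
  -- compute the product over μ
  have hprodμ : ∏ i, (1 - μ i * lam) = (1 - (7/8) * lam) ^ 3 := by
    rw [Fin.prod_univ_add (f := fun i : Fin (3 + m) => 1 - μ i * lam)]
    have hA : ∀ i : Fin 3, μ (Fin.castAdd m i) = 7/8 := by
      intro i
      simp only [hμ, Fin.coe_castAdd]
      rw [if_pos i.isLt]
    have hB : ∀ i : Fin m, μ (Fin.natAdd 3 i) = 0 := by
      intro i
      simp only [hμ, Fin.coe_natAdd]
      rw [if_neg (by omega)]
    have e1 : ∏ i : Fin 3, (1 - μ (Fin.castAdd m i) * lam) = (1 - (7/8) * lam) ^ 3 := by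
      rw [Finset.prod_congr rfl (fun i _ => by rw [hA i] :
        ∀ i ∈ (univ : Finset (Fin 3)), (1 - μ (Fin.castAdd m i) * lam) = 1 - (7/8) * lam)]
      simp
    have e2 : ∏ i : Fin m, (1 - μ (Fin.natAdd 3 i) * lam) = 1 := by
      apply Finset.prod_eq_one
      intro i _
      rw [hB i]
      ring
    rw [e1, e2, mul_one]
  -- the cube is -1/8
  have hcube : (1 - (7/8 : ℂ) * lam) ^ 3 = -1/8 := by
    simp only [hlam]
    have hI := Complex.I_sq
    set w : ℂ := ((Real.sqrt 3 : ℝ) : ℂ)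
    linear_combination ((3/64)*w^2 + (1/64)*w^3*Complex.I) * hI + (-(3/64) - (1/64)*w*Complex.I) * hw
  -- symPoly relation
  have hsym' : ∀ k : Fin (3 + m), symPoly (3 + m) ν k = (8/9 : ℂ) * symPoly (3 + m) μ k := by
    intro k
    have := congrFun hsym k
    simpa using this
  have hkν := key_identity (3 + m) ν lam
  have hkμ := key_identity (3 + m) μ lam
  apply hprodne
  rw [hkν]
  have : ∑ k : Fin (3 + m), (-lam) ^ ((k : ℕ) + 1) * symPoly (3 + m) ν k
      = (8/9 : ℂ) * ∑ k : Fin (3 + m), (-lam) ^ ((k : ℕ) + 1) * symPoly (3 + m) μ k := by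
    rw [Finset.mul_sum]
    apply Finset.sum_congr rfl
    intro k _
    rw [hsym' k]; ring
  rw [this]
  have h4 : ∑ k : Fin (3 + m), (-lam) ^ ((k : ℕ) + 1) * symPoly (3 + m) μ k
      = (1 - (7/8) * lam) ^ 3 - 1 := by
    rw [← hprodμ, hkμ]; ring
  rw [h4, hcube]
  ring
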